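/- Let R be a local Noetherian ring of characteristic p > 0, f ∈ R, r ≥ 1 an integer, and A = R[T]/(T^{p^r} - f^p). Then the embedding dimension of A equals the embedding dimension of R plus one. -/

import Mathlib

open Polynomial

set_option linter.unusedSectionVars false

section General

variable {S : Type} [CommRing S] (p r : ℕ) [Fact p.Prime]

lemma charP_adjoinRoot (H : S[X]) [CharP S p] [Nontrivial (AdjoinRoot H)] :
    CharP (AdjoinRoot H) p := by
  rw [CharP.charP_iff_prime_eq_zero (Fact.out : p.Prime)]
  rw [← map_natCast (AdjoinRoot.mk H) p, CharP.cast_eq_zero, map_zero]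

lemma nontrivial_adjoinRoot [IsLocalRing S] (H : S[X]) (hm : H.Monic) (hd : H.degree ≠ 0) :
    Nontrivial (AdjoinRoot H) := by
  refine Ideal.Quotient.nontrivial_iff.mpr ?_
  rw [Ne, Ideal.span_singleton_eq_top]
  intro hu
  have h2 : IsUnit (H.map (IsLocalRing.residue S)) := hu.map (mapRingHom _)
  have h3 := Polynomial.isUnit_iff_degree_eq_zero.mp h2
  rw [hm.degree_map] at h3
  exact hd h3

lemma purity_general (H : S[X]) [CharP (AdjoinRoot H) p] (u : S)
    (hroot : AdjoinRoot.root H ^ p ^ r = algebraMap S (AdjoinRoot H) u) (a : AdjoinRoot H) :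
    ∃ c : S, a ^ p ^ r = algebraMap S (AdjoinRoot H) c := by
  obtain ⟨t, rfl⟩ := AdjoinRoot.mk_surjective a
  induction t using Polynomial.induction_on' with
  | add t1 t2 h1 h2 =>
    obtain ⟨c1, hc1⟩ := h1
    obtain ⟨c2, hc2⟩ := h2
    exact ⟨c1 + c2, by rw [map_add, add_pow_char_pow, hc1, hc2, map_add]⟩
  | monomial n a =>
    refine ⟨a ^ p ^ r * u ^ n, ?_⟩
    have hCalg : ∀ y : S, (AdjoinRoot.mk H) (C y) = algebraMap S (AdjoinRoot H) y :=
      fun y => rfl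
    rw [← C_mul_X_pow_eq_monomial, map_mul, map_pow, AdjoinRoot.mk_X, mul_pow, ← pow_mul,
      mul_comm n (p ^ r), pow_mul, hroot, ← map_pow, ← map_pow, ← map_pow, hCalg, ← map_mul]

lemma isLocal_general [IsLocalRing S] (H : S[X]) [CharP (AdjoinRoot H) p]
    [Nontrivial (AdjoinRoot H)] (u : S)
    (hroot : AdjoinRoot.root H ^ p ^ r = algebraMap S (AdjoinRoot H) u) :
    IsLocalRing (AdjoinRoot H) := by
  refine IsLocalRing.of_isUnit_or_isUnit_one_sub_self fun a => ?_
  obtain ⟨c, hc⟩ := purity_general p r H u hroot a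
  rcases IsLocalRing.isUnit_or_isUnit_one_sub_self c with h | h
  · exact Or.inl ((isUnit_pow_iff (pow_ne_zero r (Fact.out : p.Prime).ne_zero)).mp
      (hc ▸ h.map (algebraMap S (AdjoinRoot H))))
  · refine Or.inr ((isUnit_pow_iff (pow_ne_zero r (Fact.out : p.Prime).ne_zero)).mp ?_)
    have h2 : (1 - a) ^ p ^ r = algebraMap S (AdjoinRoot H) (1 - c) := by
      rw [sub_pow_char_pow, one_pow, map_sub, map_one, hc]
    exact h2 ▸ h.map (algebraMap S (AdjoinRoot H))

end General

section Aux

variable (p r : ℕ) [Fact p.Prime] (R : Type) [CommRing R]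
    [IsLocalRing R] [CharP R p] (f : R)

local notation "hh" => ((X : R[X]) ^ p ^ r - C (f ^ p))
local notation "AA" => AdjoinRoot ((X : R[X]) ^ p ^ r - C (f ^ p))

lemma hmonic : (hh).Monic := monic_X_pow_sub_C _ (pow_ne_zero r (Fact.out : p.Prime).ne_zero)

lemma hdeg : (hh).degree ≠ 0 := by
  rw [degree_X_pow_sub_C (pow_pos (Fact.out : p.Prime).pos r)]
  exact_mod_cast (pow_pos (Fact.out : p.Prime).pos r).ne'

instance instNontrivialAA : Nontrivial (AA) :=
  nontrivial_adjoinRoot _ (hmonic p r R f) (hdeg p r R f)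

instance instCharPAA : CharP (AA) p := charP_adjoinRoot p _

lemma root_pow : (AdjoinRoot.root (hh)) ^ p ^ r = algebraMap R (AA) (f ^ p) := by
  have h0 := AdjoinRoot.eval₂_root (hh)
  simp only [eval₂_sub, eval₂_pow, eval₂_X, eval₂_C, sub_eq_zero] at h0
  rw [h0, ← AdjoinRoot.algebraMap_eq]

lemma isLocal : IsLocalRing (AA) :=
  isLocal_general p r _ (f ^ p) (root_pow p r R f)

end Aux


lemma exists_irred_pow_factor (p : ℕ) [Fact p.Prime] (k : Type) [Field k] [CharP k p]
    (m : ℕ) (c : k) :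
    ∃ (q : k[X]) (e : ℕ), Irreducible q ∧ q.Monic ∧ (X : k[X]) ^ p ^ m - C c = q ^ e ∧ e ≠ 0 := by
  have hppos : (0:ℕ) < p ^ m := pow_pos (Fact.out : p.Prime).pos m
  set kbar := AlgebraicClosure k
  haveI : CharP kbar p := charP_of_injective_algebraMap (algebraMap k kbar).injective p
  set G : k[X] := X ^ p ^ m - C c with hG
  have hGmonic : G.Monic := monic_X_pow_sub_C _ hppos.ne'
  have hGmap : G.map (algebraMap k kbar) = (X : kbar[X]) ^ p ^ m - C (algebraMap k kbar c) := by
    rw [hG, Polynomial.map_sub, Polynomial.map_pow, map_X, map_C]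
  have hGdeg : (G.map (algebraMap k kbar)).degree ≠ 0 := by
    rw [hGmap, degree_X_pow_sub_C hppos]
    exact_mod_cast hppos.ne'
  obtain ⟨α, hα⟩ := IsAlgClosed.exists_root _ hGdeg
  have hαpow : α ^ p ^ m = algebraMap k kbar c := by
    have h1 := hα
    rw [IsRoot.def, hGmap, eval_sub, eval_pow, eval_X, eval_C, sub_eq_zero] at h1
    exact h1
  have hsplit : G.map (algebraMap k kbar) = ((X : kbar[X]) - C α) ^ p ^ m := by
    rw [hGmap, sub_pow_char_pow, ← C_pow, hαpow]
  have hint : IsIntegral k α := by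
    refine ⟨G, hGmonic, ?_⟩
    rw [eval₂_eq_eval_map]
    exact hα
  set q := minpoly k α with hq
  have hqirr : Irreducible q := minpoly.irreducible hint
  have hqmonic : q.Monic := minpoly.monic hint
  have key : ∀ N : ℕ, ∀ t : k[X], t.Monic → t ∣ G → t.natDegree ≤ N → ∃ e, t = q ^ e := by
    intro N
    induction N with
    | zero =>
      intro t ht hdvd hdeg
      refine ⟨0, ?_⟩
      rw [pow_zero]
      exact Polynomial.eq_one_of_monic_natDegree_zero ht (Nat.le_zero.mp hdeg)
    | succ N ih =>
      intro t ht hdvd hdeg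
      by_cases h0 : t.natDegree = 0
      · refine ⟨0, ?_⟩
        rw [pow_zero]
        exact Polynomial.eq_one_of_monic_natDegree_zero ht h0
      have htne : t ≠ 0 := ht.ne_zero
      have htdeg : (t.map (algebraMap k kbar)).degree ≠ 0 := by
        rw [degree_map_eq_of_injective (algebraMap k kbar).injective]
        intro hc
        exact h0 (natDegree_eq_zero_iff_degree_le_zero.mpr (le_of_eq hc))
      obtain ⟨β, hβ⟩ := IsAlgClosed.exists_root _ htdeg
      have hβG : (((X : kbar[X]) - C α) ^ p ^ m).eval β = 0 := by
        rw [← hsplit]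
        obtain ⟨u, hu⟩ := hdvd
        rw [hu, Polynomial.map_mul, eval_mul, hβ, zero_mul]
      have hβα : β = α := by
        rw [eval_pow, eval_sub, eval_X, eval_C] at hβG
        have := pow_eq_zero_iff hppos.ne' |>.mp hβG
        exact sub_eq_zero.mp this
      have haev : aeval α t = 0 := by
        rw [aeval_def, eval₂_eq_eval_map, ← hβα]
        exact hβ
      obtain ⟨t', rfl⟩ := minpoly.dvd k α haev
      have ht' : t'.Monic := hqmonic.of_mul_monic_left ht
      have hqpos : 0 < q.natDegree := minpoly.natDegree_pos hint
      have hdeg' : t'.natDegree ≤ N := by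
        rw [natDegree_mul hqmonic.ne_zero ht'.ne_zero] at hdeg
        omega
      obtain ⟨e, he⟩ := ih t' ht' (dvd_trans (dvd_mul_left t' q) hdvd) hdeg'
      exact ⟨e + 1, by rw [he, pow_succ, mul_comm]⟩
  obtain ⟨e, he⟩ := key G.natDegree G hGmonic dvd_rfl le_rfl
  refine ⟨q, e, hqirr, hqmonic, he, ?_⟩
  rintro rfl
  rw [pow_zero] at he
  have : G.natDegree = p ^ m := by rw [hG, natDegree_X_pow_sub_C]
  rw [he, natDegree_one] at this
  omega

section MainGeneral
open IsLocalRing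

variable (R : Type) [CommRing R] [IsLocalRing R]

local notation "mm" => IsLocalRing.maximalIdeal R
local notation "kk" => IsLocalRing.ResidueField R
local notation "bar" => Polynomial.mapRingHom (IsLocalRing.residue R)

lemma ker_bar : RingHom.ker (Polynomial.mapRingHom (IsLocalRing.residue R))
    = Ideal.map (C : R →+* R[X]) mm := by
  rw [Polynomial.ker_mapRingHom]
  congr 1
  exact Ideal.mk_ker

lemma mem_M_iff (q t : R[X]) :
    t ∈ Ideal.map (C : R →+* R[X]) mm ⊔ Ideal.span {q} ↔
      q.map (IsLocalRing.residue R) ∣ t.map (IsLocalRing.residue R) := by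
  constructor
  · intro ht
    rw [← Ideal.mem_span_singleton]
    refine (?_ : Ideal.map (C : R →+* R[X]) mm ⊔ Ideal.span {q} ≤
      (Ideal.span {q.map (IsLocalRing.residue R)}).comap
        (Polynomial.mapRingHom (IsLocalRing.residue R))) ht
    refine sup_le ?_ ?_
    · rw [Ideal.map_le_iff_le_comap]
      intro c hc
      simp only [Ideal.mem_comap, coe_mapRingHom, map_C]
      rw [show (IsLocalRing.residue R) c = 0 from Ideal.Quotient.eq_zero_iff_mem.mpr hc, map_zero]
      exact Ideal.zero_mem _
    · rw [Ideal.span_le]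
      simp only [Set.singleton_subset_iff, SetLike.mem_coe, Ideal.mem_comap, coe_mapRingHom]
      exact Ideal.subset_span rfl
  · rintro ⟨u', hu'⟩
    obtain ⟨u, rfl⟩ := Polynomial.map_surjective _ (IsLocalRing.residue_surjective) u'
    have hker : t - q * u ∈ RingHom.ker (Polynomial.mapRingHom (IsLocalRing.residue R)) := by
      rw [RingHom.mem_ker, map_sub, map_mul]
      simp only [coe_mapRingHom] at hu' ⊢
      rw [hu', sub_self]
    rw [ker_bar] at hker
    have : t = (t - q * u) + q * u := by ring
    rw [this]
    exact Ideal.add_mem _ (Ideal.mem_sup_left hker)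
      (Ideal.mem_sup_right (Ideal.mul_mem_right _ _ (Ideal.subset_span rfl)))

variable [IsNoetherianRing R]

lemma basis_red {n : ℕ} (bR : Module.Basis (Fin n) kk (CotangentSpace R))
    (c : Fin n → mm) (hc : ∀ i, (mm).toCotangent (c i) = bR i) (c₀ : mm) :
    ∃ a : Fin n → R, (c₀ : R) - ∑ i, a i * (c i : R) ∈ (mm) ^ 2 := by
  have hsurj := IsLocalRing.residue_surjective (R := R)
  choose a ha using fun i => hsurj (bR.repr ((mm).toCotangent c₀) i)
  refine ⟨a, ?_⟩
  rw [← Ideal.toCotangent_eq_zero (mm) ⟨_, Submodule.sub_mem _ c₀.2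
    (Submodule.sum_mem _ fun i _ => Ideal.mul_mem_left _ (a i) (c i).2)⟩]
  have key : (⟨(c₀ : R) - ∑ i, a i * (c i : R), Submodule.sub_mem _ c₀.2
      (Submodule.sum_mem _ fun i _ => Ideal.mul_mem_left _ (a i) (c i).2)⟩ : mm)
      = c₀ - ∑ i, a i • c i := by
    apply Subtype.ext
    simp [Submodule.coe_sum]
  rw [key, map_sub, map_sum]
  have hsm : ∀ i, (mm).toCotangent (a i • c i) = bR.repr ((mm).toCotangent c₀) i • bR i := by
    intro i
    rw [map_smul, hc, ← ha, ← IsLocalRing.ResidueField.algebraMap_eq, algebraMap_smul]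
  rw [Finset.sum_congr rfl fun i _ => hsm i, Module.Basis.sum_repr, sub_self]

lemma theta_key {n : ℕ} (bR : Module.Basis (Fin n) kk (CotangentSpace R))
    (c : Fin n → mm) (hc : ∀ i, (mm).toCotangent (c i) = bR i)
    (q : R[X]) (v : Fin n → R[X]) (w u : R[X])
    (hw : w ∈ Ideal.map (C : R →+* R[X]) mm)
    (hu : u ∈ Ideal.map (C : R →+* R[X]) ((mm) ^ 2))
    (E : (∑ l, C ((c l : R)) * v l) + q * w = u) (i : Fin n) :
    (q.map (IsLocalRing.residue R)) ∣ ((v i).map (IsLocalRing.residue R)) := by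
  classical
  set θ : (mm : Ideal R) →ₗ[R] kk :=
    (LinearMap.restrictScalars R (bR.coord i)).comp ((mm).toCotangent) with hθdef
  have hθc : ∀ l, θ (c l) = if l = i then 1 else 0 := by
    intro l
    simp only [hθdef, LinearMap.comp_apply, LinearMap.coe_restrictScalars, hc,
      Module.Basis.coord_apply, Module.Basis.repr_self, Finsupp.single_apply]
  have hθ2 : ∀ (x : mm), (x : R) ∈ (mm) ^ 2 → θ x = 0 := by
    intro x hx
    simp only [hθdef, LinearMap.comp_apply, LinearMap.coe_restrictScalars,
      (Ideal.toCotangent_eq_zero _ _).mpr hx, map_zero]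
  have hsmul : ∀ (a : R) (ξ : kk), a • ξ = IsLocalRing.residue R a * ξ := fun a ξ => by
    rw [Algebra.smul_def, IsLocalRing.ResidueField.algebraMap_eq]
  have hwc : ∀ j, w.coeff j ∈ mm := fun j => Ideal.mem_map_C_iff.mp hw j
  have huc : ∀ j, u.coeff j ∈ (mm) ^ 2 := fun j => Ideal.mem_map_C_iff.mp hu j
  have hum : ((mm) ^ 2 : Ideal R) ≤ mm := Ideal.pow_le_self two_ne_zero
  set Θ : kk[X] := ∑ j ∈ w.support, C (θ ⟨w.coeff j, hwc j⟩) * X ^ j with hΘdef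
  have hTc : ∀ j, Θ.coeff j = θ ⟨w.coeff j, hwc j⟩ := by
    intro j
    rw [hΘdef, finset_sum_coeff]
    simp only [coeff_C_mul, coeff_X_pow, mul_ite, mul_one, mul_zero]
    rw [Finset.sum_ite_eq w.support j (fun jj => θ ⟨w.coeff jj, hwc jj⟩)]
    split_ifs with hmem
    · rfl
    · have h0 : w.coeff j = 0 := notMem_support_iff.mp hmem
      have : (⟨w.coeff j, hwc j⟩ : mm) = 0 := Subtype.ext h0
      rw [this, map_zero]
  have hmain : ∀ j, IsLocalRing.residue R ((v i).coeff j)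
      + ∑ x ∈ Finset.HasAntidiagonal.antidiagonal j,
          IsLocalRing.residue R (q.coeff x.1) * θ ⟨w.coeff x.2, hwc x.2⟩ = 0 := by
    intro j
    have hEj := congrArg (fun t : R[X] => t.coeff j) E
    simp only [coeff_add, finset_sum_coeff, coeff_C_mul] at hEj
    simp only [coeff_mul] at hEj
    have hsub : (∑ l, ((v l).coeff j) • c l)
        + (∑ x ∈ Finset.HasAntidiagonal.antidiagonal j, (q.coeff x.1) • (⟨w.coeff x.2, hwc x.2⟩ : mm))
        = ⟨u.coeff j, hum (huc j)⟩ := by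
      apply Subtype.ext
      simp only [Submodule.coe_add, Submodule.coe_sum, SetLike.val_smul, smul_eq_mul]
      rw [Finset.sum_congr rfl fun l _ => mul_comm ((v l).coeff j) ((c l : R))]
      exact hEj
    have hth := congrArg θ hsub
    rw [map_add, map_sum, map_sum, hθ2 _ (huc j)] at hth
    simp only [map_smul, hsmul, hθc, mul_ite, mul_one, mul_zero] at hth
    rw [Finset.sum_ite_eq' Finset.univ i
      (fun l => IsLocalRing.residue R ((v l).coeff j))] at hth
    simpa using hth
  refine ⟨-Θ, ?_⟩
  ext j
  rw [coeff_map, mul_neg, coeff_neg, coeff_mul]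
  have : ∑ x ∈ Finset.HasAntidiagonal.antidiagonal j,
      (q.map (IsLocalRing.residue R)).coeff x.1 * Θ.coeff x.2
      = ∑ x ∈ Finset.HasAntidiagonal.antidiagonal j,
        IsLocalRing.residue R (q.coeff x.1) * θ ⟨w.coeff x.2, hwc x.2⟩ := by
    refine Finset.sum_congr rfl fun x _ => ?_
    rw [coeff_map, hTc]
  rw [this]
  have := hmain j
  exact eq_neg_of_add_eq_zero_left this

theorem main_general (q H : R[X]) (hqirr : Irreducible (q.map (IsLocalRing.residue R)))
    (hH : H ∈ (Ideal.map (C : R →+* R[X]) mm ⊔ Ideal.span {q}) ^ 2)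
    [IsLocalRing (AdjoinRoot H)] :
    Module.finrank (ResidueField (AdjoinRoot H)) (CotangentSpace (AdjoinRoot H))
      = Module.finrank kk (CotangentSpace R) + 1 := by
  classical
  set M : Ideal R[X] := Ideal.map (C : R →+* R[X]) mm ⊔ Ideal.span {q} with hMdef
  have hHM2 : H ∈ M ^ 2 := hH
  have hHM : H ∈ M := Ideal.pow_le_self two_ne_zero hHM2
  have hqbar_ne : q.map (IsLocalRing.residue R) ≠ 0 := hqirr.ne_zero
  haveI hqmax : (Ideal.span {q.map (IsLocalRing.residue R)}).IsMaximal :=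
    PrincipalIdealRing.isMaximal_of_irreducible hqirr
  set Φ : R[X] →+* (kk[X] ⧸ Ideal.span {q.map (IsLocalRing.residue R)}) :=
    (Ideal.Quotient.mk _).comp (Polynomial.mapRingHom (IsLocalRing.residue R)) with hΦ
  have hΦsurj : Function.Surjective Φ :=
    (Ideal.Quotient.mk_surjective).comp (Polynomial.map_surjective _ residue_surjective)
  have hkerΦ : RingHom.ker Φ = M := by
    ext t
    rw [RingHom.mem_ker, hΦ, RingHom.comp_apply, Ideal.Quotient.eq_zero_iff_mem,
      Ideal.mem_span_singleton, hMdef]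
    exact ⟨(mem_M_iff R q t).mpr, (mem_M_iff R q t).mp⟩
  letI : Field (kk[X] ⧸ Ideal.span {q.map (IsLocalRing.residue R)}) := Ideal.Quotient.field _
  have hMmax : M.IsMaximal := by
    rw [← hkerΦ]
    exact RingHom.ker_isMaximal_of_surjective Φ hΦsurj
  set π' : R[X] →+* AdjoinRoot H := AdjoinRoot.mk H with hπ'
  have hπsurj : Function.Surjective π' := AdjoinRoot.mk_surjective
  have hkerπ : RingHom.ker π' = Ideal.span {H} := Ideal.mk_ker
  have hspanH : Ideal.span {H} ≤ M := by
    rw [Ideal.span_le]; simpa using hHM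
  have hspanH2 : Ideal.span {H} ≤ M ^ 2 := by
    rw [Ideal.span_le]; simpa using hHM2
  -- identification of the maximal ideal
  have hmax : maximalIdeal (AdjoinRoot H) = M.map π' := by
    refine (IsLocalRing.eq_maximalIdeal ?_).symm
    have e1 : ((R[X] ⧸ Ideal.span {H}) ⧸ (M.map (Ideal.Quotient.mk (Ideal.span {H}))))
        ≃+* R[X] ⧸ M := DoubleQuot.quotQuotEquivQuotOfLE hspanH
    letI : Field (R[X] ⧸ M) := Ideal.Quotient.field M
    exact Ideal.Quotient.maximal_of_isField _
      (MulEquiv.isField (Field.toIsField (R[X] ⧸ M)) e1.toMulEquiv)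
  -- pulled-back characterization of cotangent vanishing
  have hzero : ∀ (z : R[X]) (hz : π' z ∈ maximalIdeal (AdjoinRoot H)),
      ((maximalIdeal (AdjoinRoot H)).toCotangent ⟨π' z, hz⟩ = 0 ↔ z ∈ M ^ 2) := by
    intro z hz
    rw [Ideal.toCotangent_eq_zero]
    constructor
    · intro h
      have h' : π' z ∈ (Ideal.map π' M) ^ 2 := by rw [← hmax]; exact h
      rw [← Ideal.map_pow] at h'
      obtain ⟨y, hy, hyz⟩ := (Ideal.mem_map_iff_of_surjective π' hπsurj).mp h'
      have : z - y ∈ RingHom.ker π' := by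
        rw [RingHom.mem_ker, map_sub, hyz, sub_self]
      rw [hkerπ] at this
      have := hspanH2 this
      simpa using add_mem this hy
    · intro h
      show π' z ∈ maximalIdeal (AdjoinRoot H) ^ 2
      rw [hmax, ← Ideal.map_pow]
      exact Ideal.mem_map_of_mem _ h
  -- basis data on the R side
  set n := Module.finrank kk (CotangentSpace R) with hn
  set bR : Module.Basis (Fin n) kk (CotangentSpace R) := Module.finBasis kk (CotangentSpace R) with hbR
  choose c hcbasis using fun i => (Ideal.toCotangent_surjective mm) (bR i)
  have hCc : ∀ i, (C ((c i : R)) : R[X]) ∈ M :=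
    fun i => Ideal.mem_sup_left (Ideal.mem_map_of_mem _ (c i).2)
  have hqM : q ∈ M := Ideal.mem_sup_right (Ideal.subset_span rfl)
  have hmemA : ∀ z, z ∈ M → π' z ∈ maximalIdeal (AdjoinRoot H) := fun z hz => by
    rw [hmax]; exact Ideal.mem_map_of_mem _ hz
  set vec : Option (Fin n) → CotangentSpace (AdjoinRoot H) := fun o =>
    Option.elim o ((maximalIdeal (AdjoinRoot H)).toCotangent ⟨π' q, hmemA q hqM⟩)
      (fun i => (maximalIdeal (AdjoinRoot H)).toCotangent
        ⟨π' (C ((c i : R))), hmemA _ (hCc i)⟩) with hvec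
  -- scalar action normalization
  have hsm : ∀ (b z : R[X]) (hz : π' z ∈ maximalIdeal (AdjoinRoot H)),
      (IsLocalRing.residue (AdjoinRoot H) (π' b)) •
        ((maximalIdeal (AdjoinRoot H)).toCotangent ⟨π' z, hz⟩)
      = (maximalIdeal (AdjoinRoot H)).toCotangent
          ⟨π' (b * z), by rw [map_mul]; exact Ideal.mul_mem_left _ _ hz⟩ := by
    intro b z hz
    have h1 : (IsLocalRing.residue (AdjoinRoot H) (π' b)) •
        ((maximalIdeal (AdjoinRoot H)).toCotangent ⟨π' z, hz⟩)
        = (π' b) • ((maximalIdeal (AdjoinRoot H)).toCotangent ⟨π' z, hz⟩) := rfl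
    rw [h1, ← map_smul]
    apply congrArg
    apply Subtype.ext
    simp only [SetLike.val_smul, smul_eq_mul, map_mul]
  have hli : LinearIndependent (ResidueField (AdjoinRoot H)) vec := by
    have hM2le : M ^ 2 ≤ (Ideal.map (C : R →+* R[X]) ((mm) ^ 2)
        ⊔ (Ideal.span {q} * Ideal.map (C : R →+* R[X]) mm)) ⊔ Ideal.span {q ^ 2} := by
      rw [pow_two]
      refine Ideal.mul_le.mpr ?_
      intro r hr s hs
      rw [hMdef] at hr hs
      obtain ⟨r1, hr1, r2, hr2, rfl⟩ := Submodule.mem_sup.mp hr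
      obtain ⟨s1, hs1, s2, hs2, rfl⟩ := Submodule.mem_sup.mp hs
      have t11 : r1 * s1 ∈ Ideal.map (C : R →+* R[X]) ((mm) ^ 2) := by
        rw [pow_two, Ideal.map_mul]
        exact Ideal.mul_mem_mul hr1 hs1
      have t12 : r1 * s2 ∈ Ideal.span {q} * Ideal.map (C : R →+* R[X]) mm := by
        rw [mul_comm r1 s2]
        exact Ideal.mul_mem_mul hs2 hr1
      have t21 : r2 * s1 ∈ Ideal.span {q} * Ideal.map (C : R →+* R[X]) mm :=
        Ideal.mul_mem_mul hr2 hs1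
      have t22 : r2 * s2 ∈ Ideal.span ({q ^ 2} : Set R[X]) := by
        rw [pow_two, ← Ideal.span_singleton_mul_span_singleton]
        exact Ideal.mul_mem_mul hr2 hs2
      have expand : (r1 + r2) * (s1 + s2) = ((r1 * s1 + (r1 * s2 + r2 * s1)) + r2 * s2) := by
        ring
      rw [expand]
      exact add_mem (Ideal.mem_sup_left (add_mem (Ideal.mem_sup_left t11)
        (Ideal.mem_sup_right (add_mem t12 t21)))) (Ideal.mem_sup_right t22)
    set Br : R[X] →+* kk[X] := Polynomial.mapRingHom (IsLocalRing.residue R) with hBr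
    have hBrker : ∀ t : R[X], t ∈ Ideal.map (C : R →+* R[X]) mm → Br t = 0 := by
      intro t ht
      rw [← ker_bar R] at ht
      exact ht
    have hBrC : ∀ i : Fin n, Br (C ((c i : R))) = 0 := fun i =>
      hBrker _ (Ideal.mem_map_of_mem _ (c i).2)
    rw [Fintype.linearIndependent_iff]
    intro g hg o
    have hbex : ∀ o : Option (Fin n), ∃ b : R[X],
        IsLocalRing.residue (AdjoinRoot H) (π' b) = g o := by
      intro o
      obtain ⟨a, ha⟩ := IsLocalRing.residue_surjective (g o)
      obtain ⟨t, ht⟩ := hπsurj a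
      exact ⟨t, by rw [ht, ha]⟩
    choose b hb using hbex
    set z : R[X] := b none * q + ∑ l, b (some l) * C ((c l : R)) with hzdef
    have hπz : π' z ∈ maximalIdeal (AdjoinRoot H) := by
      rw [hzdef, map_add, map_mul, map_sum]
      refine add_mem (Ideal.mul_mem_left _ _ (hmemA q hqM)) (Submodule.sum_mem _ fun l _ => ?_)
      rw [map_mul]
      exact Ideal.mul_mem_left _ _ (hmemA _ (hCc l))
    have hsum : ∑ o, g o • vec o
        = (maximalIdeal (AdjoinRoot H)).toCotangent ⟨π' z, hπz⟩ := by
      rw [Fintype.sum_option]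
      have hnone : g none • vec none = (maximalIdeal (AdjoinRoot H)).toCotangent
          ⟨π' (b none * q), by rw [map_mul]; exact Ideal.mul_mem_left _ _ (hmemA q hqM)⟩ := by
        rw [← hb none]
        exact hsm (b none) q (hmemA q hqM)
      have hsome : ∀ i : Fin n, g (some i) • vec (some i)
          = (maximalIdeal (AdjoinRoot H)).toCotangent
            ⟨π' (b (some i) * C ((c i : R))), by
              rw [map_mul]; exact Ideal.mul_mem_left _ _ (hmemA _ (hCc i))⟩ := by
        intro i
        rw [← hb (some i)]
        exact hsm (b (some i)) (C ((c i : R))) (hmemA _ (hCc i))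
      rw [hnone, Finset.sum_congr rfl fun i _ => hsome i, ← map_sum, ← map_add]
      congr 1
      apply Subtype.ext
      push_cast [Submodule.coe_sum]
      rw [← map_sum π', ← map_add π']
    rw [hsum] at hg
    have hzM2 : z ∈ M ^ 2 := (hzero z hπz).mp hg
    obtain ⟨y12, hy12, y3, hy3, hzdecomp⟩ := Submodule.mem_sup.mp (hM2le hzM2)
    obtain ⟨z₁, hz₁, y1, hy1, hy12eq⟩ := Submodule.mem_sup.mp hy12
    obtain ⟨w₁, hw₁, hw₁eq⟩ := Ideal.mem_span_singleton_mul.mp hy1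
    obtain ⟨β, hβeq⟩ := Ideal.mem_span_singleton'.mp hy3
    -- the master equation in R[X]
    have hmaster : b none * q + ∑ l, b (some l) * C ((c l : R))
        = z₁ + q * w₁ + β * q ^ 2 := by
      have h1 : z = z₁ + q * w₁ + β * q ^ 2 := by
        rw [← hzdecomp, ← hy12eq, ← hw₁eq, ← hβeq]
      rw [hzdef] at h1
      exact h1
    have hz₁m : z₁ ∈ Ideal.map (C : R →+* R[X]) mm :=
      Ideal.map_mono (Ideal.pow_le_self two_ne_zero) hz₁
    have hBrz : Br z = Br (b none) * Br q := by
      rw [hzdef, map_add, map_mul, map_sum]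
      have hzc : ∀ l : Fin n, Br (b (some l) * C ((c l : R))) = 0 := by
        intro l
        rw [map_mul, hBrC l, mul_zero]
      rw [Finset.sum_congr rfl fun l _ => hzc l]
      simp
    have hBrz2 : Br z = Br β * Br q ^ 2 := by
      have h1 : z = z₁ + q * w₁ + β * q ^ 2 := by rw [hzdef]; exact hmaster
      rw [h1, map_add, map_add, map_mul, map_mul, map_pow, hBrker z₁ hz₁m, hBrker w₁ hw₁,
        mul_zero, add_zero, zero_add]
    have hA : Br (b none) = Br β * Br q := by
      have h2 : Br (b none) * Br q = (Br β * Br q) * Br q := by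
        rw [← hBrz, hBrz2, pow_two]
        ring
      exact mul_right_cancel₀ hqbar_ne h2
    have hnoneM : b none ∈ M := by
      refine (mem_M_iff R q (b none)).mpr ⟨Br β, ?_⟩
      rw [mul_comm]
      exact hA
    have hgnone : g none = 0 := by
      rw [← hb none]
      exact Ideal.Quotient.eq_zero_iff_mem.mpr (hmemA _ hnoneM)
    set w₂ : R[X] := b none - w₁ - q * β with hw₂def
    have hw₂ : w₂ ∈ Ideal.map (C : R →+* R[X]) mm := by
      rw [← ker_bar R]
      have : Br w₂ = 0 := by
        rw [hw₂def, map_sub, map_sub, map_mul, hA, hBrker w₁ hw₁]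
        ring
      exact this
    have hE : (∑ l, C ((c l : R)) * (b (some l))) + q * w₂ = z₁ := by
      have hS : (∑ l, C ((c l : R)) * (b (some l))) = ∑ l, b (some l) * C ((c l : R)) :=
        Finset.sum_congr rfl fun l _ => mul_comm _ _
      rw [hS, hw₂def]
      linear_combination hmaster
    have hdvd : ∀ i, (q.map (IsLocalRing.residue R))
        ∣ ((b (some i)).map (IsLocalRing.residue R)) :=
      fun i => theta_key R bR c hcbasis q (fun l => b (some l)) w₂ z₁ hw₂ hz₁ hE i
    match o with
    | none => exact hgnone
    | some i =>
      have hiM : b (some i) ∈ M := (mem_M_iff R q _).mpr (hdvd i)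
      rw [← hb (some i)]
      exact Ideal.Quotient.eq_zero_iff_mem.mpr (hmemA _ hiM)
  have hMspan : M = Ideal.span (((C : R →+* R[X]) '' (mm : Set R)) ∪ {q}) := by
    rw [hMdef, Ideal.span_union]
    congr 1
  have hsp : ⊤ ≤ Submodule.span (ResidueField (AdjoinRoot H)) (Set.range vec) := by
    rintro x -
    obtain ⟨⟨y, hy⟩, rfl⟩ := Ideal.toCotangent_surjective (maximalIdeal (AdjoinRoot H)) x
    have hy' : y ∈ Ideal.map π' M := by rw [← hmax]; exact hy
    obtain ⟨z, hzM, hzy⟩ := (Ideal.mem_map_iff_of_surjective π' hπsurj).mp hy'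
    have hx2 : (maximalIdeal (AdjoinRoot H)).toCotangent ⟨y, hy⟩
        = (maximalIdeal (AdjoinRoot H)).toCotangent ⟨π' z, hmemA z hzM⟩ := by
      congr 1
      exact Subtype.ext hzy.symm
    rw [hx2]
    have hgen : ∀ t (ht : t ∈ Ideal.span (((C : R →+* R[X]) '' (mm : Set R)) ∪ {q})),
        (maximalIdeal (AdjoinRoot H)).toCotangent
          ⟨π' t, hmemA t (hMspan ▸ ht)⟩ ∈
          Submodule.span (ResidueField (AdjoinRoot H)) (Set.range vec) := by
      intro t ht
      induction ht using Submodule.span_induction with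
      | mem t hts =>
        rcases hts with ⟨c₀, hc₀, rfl⟩ | rfl
        · obtain ⟨a, ha⟩ := basis_red R bR c hcbasis ⟨c₀, hc₀⟩
          have hrem : (C (c₀ - ∑ i, a i * ((c i : R))) : R[X]) ∈ M ^ 2 := by
            have h0 : (C (c₀ - ∑ i, a i * ((c i : R))) : R[X])
                ∈ Ideal.map (C : R →+* R[X]) ((mm) ^ 2) := Ideal.mem_map_of_mem _ ha
            rw [Ideal.map_pow] at h0
            exact Ideal.pow_right_mono le_sup_left 2 h0
          have hremA : π' (C (c₀ - ∑ i, a i * ((c i : R)))) ∈ maximalIdeal (AdjoinRoot H) :=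
            hmemA _ (Ideal.pow_le_self two_ne_zero hrem)
          have hdec : (C c₀ : R[X]) = (∑ i, C (a i) * C ((c i : R)))
              + C (c₀ - ∑ i, a i * ((c i : R))) := by
            have h1 : (C (c₀ - ∑ i, a i * ((c i : R))) : R[X])
                = C c₀ - ∑ i, C (a i) * C ((c i : R)) := by
              rw [map_sub, map_sum]
              simp only [map_mul]
            rw [h1]
            ring
          have hterm : ∀ i : Fin n, (IsLocalRing.residue (AdjoinRoot H) (π' (C (a i)))) •
              vec (some i) = (maximalIdeal (AdjoinRoot H)).toCotangent
                ⟨π' (C (a i) * C ((c i : R))), by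
                  rw [map_mul]; exact Ideal.mul_mem_left _ _ (hmemA _ (hCc i))⟩ := by
            intro i
            exact hsm (C (a i)) (C ((c i : R))) (hmemA _ (hCc i))
          have hsplit : (maximalIdeal (AdjoinRoot H)).toCotangent
              ⟨π' (C c₀), hmemA _ (hMspan ▸ Submodule.subset_span
                (Or.inl ⟨c₀, hc₀, rfl⟩))⟩
              = (∑ i, (IsLocalRing.residue (AdjoinRoot H) (π' (C (a i)))) • vec (some i))
                + (maximalIdeal (AdjoinRoot H)).toCotangent
                  ⟨π' (C (c₀ - ∑ i, a i * ((c i : R)))), hremA⟩ := by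
            rw [Finset.sum_congr rfl fun i _ => hterm i, ← map_sum, ← map_add]
            congr 1
            apply Subtype.ext
            show π' (C c₀) = ((∑ i, (⟨π' (C (a i) * C ((c i : R))), _⟩ :
              maximalIdeal (AdjoinRoot H))) : maximalIdeal (AdjoinRoot H))
              + (⟨π' (C (c₀ - ∑ i, a i * ((c i : R)))), hremA⟩ : maximalIdeal (AdjoinRoot H))
            push_cast [Submodule.coe_sum]
            rw [← map_sum π', ← map_add π']
            exact congrArg π' hdec
          rw [hsplit]
          refine add_mem (Submodule.sum_mem _ fun i _ => Submodule.smul_mem _ _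
            (Submodule.subset_span ⟨some i, rfl⟩)) ?_
          rw [(hzero _ _).mpr hrem]
          exact Submodule.zero_mem _
        · exact Submodule.subset_span ⟨none, rfl⟩
      | zero =>
        have h0 : ((⟨π' 0, hmemA 0 (hMspan ▸ Submodule.zero_mem _)⟩ :
            maximalIdeal (AdjoinRoot H))) = 0 := Subtype.ext (map_zero π')
        rw [h0, map_zero]
        exact Submodule.zero_mem _
      | add z₁ z₂ h₁ h₂ ih₁ ih₂ =>
        have hadd : (maximalIdeal (AdjoinRoot H)).toCotangent
            ⟨π' (z₁ + z₂), hmemA _ (hMspan ▸ Submodule.add_mem _ h₁ h₂)⟩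
            = (maximalIdeal (AdjoinRoot H)).toCotangent ⟨π' z₁, hmemA _ (hMspan ▸ h₁)⟩
              + (maximalIdeal (AdjoinRoot H)).toCotangent ⟨π' z₂, hmemA _ (hMspan ▸ h₂)⟩ := by
          rw [← map_add]
          congr 1
        rw [hadd]
        exact add_mem ih₁ ih₂
      | smul b t ht ih =>
        have hsmeq : (maximalIdeal (AdjoinRoot H)).toCotangent
            ⟨π' (b • t), hmemA _ (hMspan ▸ Submodule.smul_mem _ b ht)⟩
            = (IsLocalRing.residue (AdjoinRoot H) (π' b)) •
              (maximalIdeal (AdjoinRoot H)).toCotangent ⟨π' t, hmemA _ (hMspan ▸ ht)⟩ := by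
          rw [hsm]
          congr 1
        rw [hsmeq]
        exact Submodule.smul_mem _ _ ih
    exact hgen z (hMspan ▸ hzM)
  rw [Module.finrank_eq_card_basis (Module.Basis.mk hli hsp), Fintype.card_option, Fintype.card_fin]

end MainGeneral

section Glue2

lemma charP_kk (p : ℕ) [Fact p.Prime] (R : Type) [CommRing R] [IsLocalRing R] [CharP R p] :
    CharP (IsLocalRing.ResidueField R) p := by
  rw [CharP.charP_iff_prime_eq_zero (Fact.out : p.Prime)]
  rw [← map_natCast (IsLocalRing.residue R) p, CharP.cast_eq_zero, map_zero]

lemma h_eq_gpow (p r : ℕ) [Fact p.Prime] (R : Type) [CommRing R] [CharP R p] (f : R)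
    (hr : 1 ≤ r) :
    ((X : R[X]) ^ p ^ r - C (f ^ p)) = ((X : R[X]) ^ p ^ (r - 1) - C f) ^ p := by
  have h1 : ((X : R[X]) ^ p ^ (r - 1) - C f) ^ p
      = ((X : R[X]) ^ p ^ (r - 1)) ^ p - (C f) ^ p := sub_pow_char _ _
  have hr' : r - 1 + 1 = r := by omega
  rw [h1, ← pow_mul, ← pow_succ, hr', ← C_pow]

end Glue2

/-- The embedding dimension of a local ring: `dim_k (m/m²)`. -/
noncomputable def embDim (R : Type) [CommRing R] [IsLocalRing R] : ℕ :=
  Module.finrank (IsLocalRing.ResidueField R) (IsLocalRing.CotangentSpace R)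

/-- Let `R` be a local Noetherian ring of characteristic `p > 0`, `f ∈ R`, `r ≥ 1`, and
`A = R[T]/(T^{p^r} - f^p)`.  Then `A` is local and `edim(A) = edim(R) + 1`. -/
theorem stmt_4 (p r : ℕ) [Fact p.Prime] (hr : 1 ≤ r) (R : Type) [CommRing R]
    [IsLocalRing R] [IsNoetherianRing R] [CharP R p] (f : R) :
    ∃ h : IsLocalRing (AdjoinRoot ((X : R[X]) ^ p ^ r - C (f ^ p))),
      @embDim (AdjoinRoot ((X : R[X]) ^ p ^ r - C (f ^ p))) _ h = embDim R + 1 := by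
  haveI hloc := isLocal p r R f
  refine ⟨hloc, ?_⟩
  haveI := charP_kk p R
  obtain ⟨qbar, e, hirr, hmon, hfact, hene⟩ :=
    exists_irred_pow_factor p (IsLocalRing.ResidueField R) (r - 1) (IsLocalRing.residue R f)
  obtain ⟨q, hq⟩ := Polynomial.map_surjective _ (IsLocalRing.residue_surjective) qbar
  have hqirr : Irreducible (q.map (IsLocalRing.residue R)) := hq ▸ hirr
  set g : R[X] := X ^ p ^ (r - 1) - C f with hg
  have hgbar : g.map (IsLocalRing.residue R) = qbar ^ e := by
    rw [hg, Polynomial.map_sub, Polynomial.map_pow, map_X, map_C]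
    exact hfact
  have hgq : g - q ^ e ∈ Ideal.map (C : R →+* R[X]) (IsLocalRing.maximalIdeal R) := by
    rw [← ker_bar R]
    show (Polynomial.mapRingHom (IsLocalRing.residue R)) (g - q ^ e) = 0
    rw [map_sub, map_pow]
    show g.map (IsLocalRing.residue R) - (q.map (IsLocalRing.residue R)) ^ e = 0
    rw [hgbar, hq, sub_self]
  set M := Ideal.map (C : R →+* R[X]) (IsLocalRing.maximalIdeal R) ⊔ Ideal.span {q} with hM
  have hqM : q ∈ M := Ideal.mem_sup_right (Ideal.subset_span rfl)
  have hgM2 : g ^ p ∈ M ^ 2 := by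
    have hsplit : g ^ p = (g - q ^ e) ^ p + (q ^ e) ^ p := by
      rw [← add_pow_char, sub_add_cancel]
    rw [hsplit]
    refine add_mem ?_ ?_
    · have h1 : (g - q ^ e) ∈ M := Ideal.mem_sup_left hgq
      exact Ideal.pow_le_pow_right (Fact.out : p.Prime).two_le (Ideal.pow_mem_pow h1 p)
    · rw [← pow_mul]
      refine Ideal.pow_le_pow_right ?_ (Ideal.pow_mem_pow hqM (e * p))
      have he1 : 1 ≤ e := Nat.one_le_iff_ne_zero.mpr hene
      have hp2 : 2 ≤ p := (Fact.out : p.Prime).two_le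
      calc (2:ℕ) = 1 * 2 := by ring
        _ ≤ e * p := Nat.mul_le_mul he1 hp2
  have hH : ((X : R[X]) ^ p ^ r - C (f ^ p)) ∈ M ^ 2 := by
    rw [h_eq_gpow p r R f hr]
    exact hgM2
  exact main_general R q _ hqirr hH
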